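/- If a Banach space X is a Grothendieck space and has weak*-sequentially compact dual ball, then X is reflexive. -/

import Mathlib

set_option maxHeartbeats 1000000


open Filter Topology MeasureTheory
open scoped ENNReal

noncomputable section

/-- A Banach space `X` has weak*-sequentially compact dual ball if every sequence in the
closed unit ball of `X*` has a weak*-convergent subsequence. -/
def WStarSeqCompactDualBall (X : Type*) [SeminormedAddCommGroup X] [NormedSpace ℝ X] : Prop :=
  ∀ f : ℕ → (X →L[ℝ] ℝ), (∀ n, ‖f n‖ ≤ 1) →
    ∃ φ : ℕ → ℕ, StrictMono φ ∧ ∃ g : X →L[ℝ] ℝ,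
      ∀ x : X, Tendsto (fun k => f (φ k) x) atTop (nhds (g x))

/-- A Banach space `X` is a Grothendieck space if every weak*-convergent sequence in `X*`
is weakly convergent. -/
def GrothendieckSpace (X : Type*) [SeminormedAddCommGroup X] [NormedSpace ℝ X] : Prop :=
  ∀ (f : ℕ → (X →L[ℝ] ℝ)) (g : X →L[ℝ] ℝ),
    (∀ x : X, Tendsto (fun n => f n x) atTop (nhds (g x))) →
    ∀ F : (X →L[ℝ] ℝ) →L[ℝ] ℝ, Tendsto (fun n => F (f n)) atTop (nhds (F g))

/-- An operator is weakly compact if the closure of the image of the closed unit ball is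
compact in the weak topology of the codomain. -/
def IsWeaklyCompactOp {X Y : Type*} [SeminormedAddCommGroup X] [NormedSpace ℝ X]
    [SeminormedAddCommGroup Y] [NormedSpace ℝ Y] (T : X →L[ℝ] Y) : Prop :=
  IsCompact (closure (toWeakSpace ℝ Y '' (T '' Metric.closedBall (0:X) 1)))

/-- `ℓ¹`, the space of absolutely summable real sequences. -/
abbrev ellOne : Type := ↥(lp (fun _ : ℕ => ℝ) 1)

/-- Two normed spaces are isomorphic if there is a continuous linear bijection between them
with continuous inverse. -/
def IsomorphicBanach (X Y : Type*) [SeminormedAddCommGroup X] [NormedSpace ℝ X]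
    [SeminormedAddCommGroup Y] [NormedSpace ℝ Y] : Prop :=
  Nonempty (X ≃L[ℝ] Y)

lemma helly {Y : Type*} [NormedAddCommGroup Y] [NormedSpace ℝ Y]
    {n : ℕ} (μ : Fin n → Y →L[ℝ] ℝ) (c : Fin n → ℝ) {M : ℝ} (hM : 0 ≤ M)
    (h : ∀ a : Fin n → ℝ, |∑ i, a i * c i| ≤ M * ‖∑ i, a i • μ i‖)
    {ε : ℝ} (hε : 0 < ε) :
    ∃ y : Y, ‖y‖ ≤ M + ε ∧ ∀ i, μ i y = c i := by
  classical
  set Lμ : Fin n → Y →ₗ[ℝ] ℝ := fun i => (μ i : Y →ₗ[ℝ] ℝ) with hLμ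
  -- Step A: there exists y₀ with μ i y₀ = c i
  have hcmem : c ∈ LinearMap.range (LinearMap.pi Lμ) := by
    by_contra hc
    obtain ⟨φ, hφc, hφmap⟩ := Submodule.exists_dual_map_eq_bot_of_notMem hc inferInstance
    set a : Fin n → ℝ := fun i => φ (fun j => if i = j then 1 else 0) with ha
    have hφ_eq : ∀ w : Fin n → ℝ, φ w = ∑ i, a i * w i := by
      intro w
      rw [LinearMap.pi_apply_eq_sum_univ φ w]
      refine Finset.sum_congr rfl fun i _ => ?_
      rw [smul_eq_mul, mul_comm]
    have hzero : (∑ i, a i • μ i) = 0 := by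
      ext y
      have hmem : LinearMap.pi Lμ y ∈ LinearMap.range (LinearMap.pi Lμ) :=
        LinearMap.mem_range_self _ y
      have h0 : φ (LinearMap.pi Lμ y) = 0 := by
        have := Submodule.mem_map_of_mem (f := φ) hmem
        rwa [hφmap, Submodule.mem_bot] at this
      have h1 : ∑ i, a i * μ i y = 0 := by
        rw [← h0, hφ_eq]
        rfl
      simpa [ContinuousLinearMap.sum_apply, ContinuousLinearMap.smul_apply, smul_eq_mul] using h1
    have h2 := h a
    rw [hzero, norm_zero, mul_zero] at h2
    exact hφc (by rw [hφ_eq c, abs_eq_zero.mp (le_antisymm h2 (abs_nonneg _))])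
  obtain ⟨y₀, hy₀⟩ := hcmem
  have hy₀i : ∀ i, μ i y₀ = c i := fun i => congrFun hy₀ i
  -- the kernel
  set K : Submodule ℝ Y := ⨅ i, LinearMap.ker (Lμ i) with hK
  have hKmem : ∀ y, y ∈ K ↔ ∀ i, μ i y = 0 := by
    intro y
    simp [hK, Submodule.mem_iInf, LinearMap.mem_ker, hLμ]
  haveI hKc : IsClosed (K : Set Y) := by
    have : (K : Set Y) = ⋂ i, ((μ i) ⁻¹' {0}) := by
      ext y
      simp [Set.mem_iInter, hKmem y]
    rw [this]
    exact isClosed_iInter fun i => (isClosed_singleton).preimage (μ i).continuous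
  -- Step B: quotient norm bound
  have hznorm : ‖(Submodule.Quotient.mk y₀ : Y ⧸ K)‖ ≤ M := by
    by_cases hz : (Submodule.Quotient.mk y₀ : Y ⧸ K) = 0
    · rw [hz, norm_zero]; exact hM
    · obtain ⟨ψ, hψn, hψz⟩ := exists_dual_vector ℝ _ (norm_ne_zero_iff.mpr hz)
      set χ : Y →ₗ[ℝ] ℝ := ψ.toLinearMap.comp K.mkQ with hχ
      have hχker : (⨅ i, LinearMap.ker (Lμ i)) ≤ LinearMap.ker χ := by
        intro y hy
        have hmk : (Submodule.Quotient.mk y : Y ⧸ K) = 0 :=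
          (Submodule.Quotient.mk_eq_zero K).2 (hK ▸ hy)
        simp [hχ, LinearMap.mem_ker, Submodule.mkQ_apply, hmk]
      have hspan := mem_span_of_iInf_ker_le_ker (L := Lμ) hχker
      obtain ⟨a, ha⟩ := (Submodule.mem_span_range_iff_exists_fun ℝ).1 hspan
      have hSapp : ∀ y : Y, (∑ i, a i • μ i) y = ψ (Submodule.Quotient.mk y) := by
        intro y
        have h1 := LinearMap.congr_fun ha y
        simpa [ContinuousLinearMap.sum_apply, ContinuousLinearMap.smul_apply, smul_eq_mul,
          hχ, Submodule.mkQ_apply, hLμ] using h1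
      have hSnorm : ‖∑ i, a i • μ i‖ ≤ 1 := by
        refine ContinuousLinearMap.opNorm_le_bound _ zero_le_one fun y => ?_
        rw [hSapp]
        calc ‖ψ (Submodule.Quotient.mk y)‖ ≤ ‖ψ‖ * ‖(Submodule.Quotient.mk y : Y ⧸ K)‖ :=
              ψ.le_opNorm _
          _ ≤ 1 * ‖y‖ := by
              rw [hψn]
              exact mul_le_mul_of_nonneg_left (Submodule.Quotient.norm_mk_le _ _) zero_le_one
      have hψz' : ψ (Submodule.Quotient.mk y₀) = ‖(Submodule.Quotient.mk y₀ : Y ⧸ K)‖ := by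
        exact_mod_cast hψz
      have hzval : ‖(Submodule.Quotient.mk y₀ : Y ⧸ K)‖ = ∑ i, a i * c i := by
        rw [← hψz', ← hSapp]
        simp [ContinuousLinearMap.sum_apply, ContinuousLinearMap.smul_apply, smul_eq_mul, hy₀i]
      calc ‖(Submodule.Quotient.mk y₀ : Y ⧸ K)‖ = ∑ i, a i * c i := hzval
        _ ≤ |∑ i, a i * c i| := le_abs_self _
        _ ≤ M * ‖∑ i, a i • μ i‖ := h a
        _ ≤ M * 1 := mul_le_mul_of_nonneg_left hSnorm hM
        _ = M := mul_one M
  obtain ⟨y₁, hy₁mk, hy₁n⟩ := Submodule.Quotient.norm_mk_lt (Submodule.Quotient.mk y₀ : Y ⧸ K) hε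
  refine ⟨y₁, le_trans hy₁n.le (by linarith), fun i => ?_⟩
  have hdiff : y₁ - y₀ ∈ K := (Submodule.Quotient.eq K).1 hy₁mk
  have h3 := (hKmem _).1 hdiff i
  have h4 : μ i y₁ - μ i y₀ = 0 := by rw [← map_sub]; exact h3
  have := hy₀i i
  linarith



lemma clm_norm_smul {E F : Type*} [SeminormedAddCommGroup E] [NormedSpace ℝ E]
    [SeminormedAddCommGroup F] [NormedSpace ℝ F] (a : ℝ) (f : E →L[ℝ] F) :
    ‖a • f‖ = |a| * ‖f‖ := by
  rcases eq_or_ne a 0 with rfl | ha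
  · simp
  · apply le_antisymm
    · simpa [Real.norm_eq_abs] using ContinuousLinearMap.opNorm_smul_le a f
    · have h1 : a⁻¹ • (a • f) = f := by
        ext y
        simp [smul_smul, inv_mul_cancel₀ ha]
      have h2 : ‖f‖ ≤ |a|⁻¹ * ‖a • f‖ := by
        conv_lhs => rw [← h1]
        simpa [Real.norm_eq_abs] using ContinuousLinearMap.opNorm_smul_le a⁻¹ (a • f)
      have ha' : (0:ℝ) < |a| := abs_pos.2 ha
      calc |a| * ‖f‖ ≤ |a| * (|a|⁻¹ * ‖a • f‖) := mul_le_mul_of_nonneg_left h2 ha'.le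
        _ = ‖a • f‖ := by field_simp

section Step

variable {X : Type*} [NormedAddCommGroup X] [NormedSpace ℝ X]

lemma step_exists
    (F : (X →L[ℝ] ℝ) →L[ℝ] ℝ) (n : ℕ) (v : ℕ → (X →L[ℝ] ℝ) × X) :
    ∃ p : (X →L[ℝ] ℝ) × X,
      ‖p.1‖ ≤ 1 ∧ ‖p.2‖ ≤ 1 ∧
      F p.1 = (Metric.infDist F (Set.range (NormedSpace.inclusionInDoubleDual ℝ X))) / 2 ∧
      (∀ m < n, p.1 ((v m).2) = 0) ∧
      (∀ m < n, (v m).1 p.2 = F ((v m).1) * (‖F‖ + 1)⁻¹) ∧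
      p.1 p.2 = F p.1 * (‖F‖ + 1)⁻¹ := by
  classical
  obtain ⟨J, hJ⟩ : ∃ J' : X →L[ℝ] ((X →L[ℝ] ℝ) →L[ℝ] ℝ),
      J' = NormedSpace.inclusionInDoubleDual ℝ X := ⟨_, rfl⟩
  have hJapp : ∀ (y : X) (g : X →L[ℝ] ℝ), J y g = g y := by
    intro y g; rw [hJ]; rfl
  rw [show (NormedSpace.inclusionInDoubleDual ℝ X : X →L[ℝ] ((X →L[ℝ] ℝ) →L[ℝ] ℝ)) = J
    from hJ.symm]
  obtain ⟨d, hd⟩ : ∃ d' : ℝ, d' = Metric.infDist F (Set.range J) := ⟨_, rfl⟩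
  rw [← hd]
  have hd0 : 0 ≤ d := hd ▸ Metric.infDist_nonneg
  -- first Helly application: find f
  have hypA : ∀ a : Fin (n+1) → ℝ,
      |∑ i, a i * (Fin.cons (d/2) 0 : Fin (n+1) → ℝ) i| ≤
      (1/2 : ℝ) * ‖∑ i, a i • (Fin.cons F (fun i : Fin n => J ((v i).2)) : Fin (n+1) → _) i‖ := by
    intro a
    have hL : ∑ i, a i * (Fin.cons (d/2) 0 : Fin (n+1) → ℝ) i = a 0 * (d/2) := by
      rw [Fin.sum_univ_succ]
      simp
    have hR : (∑ i, a i • (Fin.cons F (fun i : Fin n => J ((v i).2)) : Fin (n+1) → _) i)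
        = a 0 • F + ∑ i : Fin n, a i.succ • J ((v i).2) := by
      rw [Fin.sum_univ_succ]
      simp
    rw [hL, hR]
    by_cases ha0 : a 0 = 0
    · rw [ha0]
      simp only [zero_mul, abs_zero]
      positivity
    · have hw : ∑ i : Fin n, a i.succ • J ((v i).2) = J (∑ i : Fin n, a i.succ • (v i).2) := by
        rw [_root_.map_sum]
        refine Finset.sum_congr rfl fun i _ => ?_
        rw [_root_.map_smul]
      set u : X := ∑ i : Fin n, a i.succ • (v i).2 with hu
      set p : X := (-(a 0)⁻¹) • u with hp
      have hJp : J p = (-(a 0)⁻¹) • J u := _root_.map_smul J _ _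
      have key : a 0 • F + J u = a 0 • (F - J p) := by
        ext g
        have hp' : J p g = -(a 0)⁻¹ * (J u g) := by rw [hJp]; simp
        simp only [ContinuousLinearMap.add_apply, ContinuousLinearMap.smul_apply,
          ContinuousLinearMap.sub_apply, smul_eq_mul, hp']
        field_simp
        ring
      have hnorm : ‖a 0 • F + J u‖ = |a 0| * ‖F - J p‖ := by
        rw [key]
        exact clm_norm_smul _ _
      have hdist : d ≤ ‖F - J p‖ := by
        calc d ≤ dist F (J p) := hd ▸ Metric.infDist_le_dist_of_mem (Set.mem_range_self p)
          _ = ‖F - J p‖ := dist_eq_norm F (J p)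
      rw [hw, hnorm, abs_mul]
      have h1 : |d/2| = d/2 := abs_of_nonneg (by linarith)
      rw [h1]
      have habs : 0 ≤ |a 0| := abs_nonneg _
      calc |a 0| * (d/2) = 1/2 * (|a 0| * d) := by ring
        _ ≤ 1/2 * (|a 0| * ‖F - J p‖) :=
            mul_le_mul_of_nonneg_left (mul_le_mul_of_nonneg_left hdist habs) (by norm_num)
  obtain ⟨f, hf1, hf2⟩ := helly (Fin.cons F (fun i : Fin n => J ((v i).2)))
      (Fin.cons (d/2) 0) (by norm_num : (0:ℝ) ≤ 1/2) hypA (by norm_num : (0:ℝ) < 1/2)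
  have hfn : ‖f‖ ≤ 1 := by linarith [hf1]
  have hFf : F f = d / 2 := by
    have h0 := hf2 0
    rwa [Fin.cons_zero, Fin.cons_zero] at h0
  have hfv : ∀ m < n, f ((v m).2) = 0 := by
    intro m hm
    have h0 := hf2 (⟨m, hm⟩ : Fin n).succ
    rw [Fin.cons_succ, Fin.cons_succ] at h0
    rw [← hJapp ((v m).2) f]
    exact h0.trans rfl
  -- second Helly application: find x
  have hypB : ∀ a : Fin (n+1) → ℝ,
      |∑ i, a i * F ((Fin.snoc (fun i : Fin n => (v i).1) f : Fin (n+1) → _) i)| ≤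
      ‖F‖ * ‖∑ i, a i • (Fin.snoc (fun i : Fin n => (v i).1) f : Fin (n+1) → _) i‖ := by
    intro a
    have h1 : ∑ i, a i * F ((Fin.snoc (fun i : Fin n => (v i).1) f : Fin (n+1) → _) i)
        = F (∑ i, a i • (Fin.snoc (fun i : Fin n => (v i).1) f : Fin (n+1) → _) i) := by
      rw [_root_.map_sum]
      refine Finset.sum_congr rfl fun i _ => ?_
      rw [_root_.map_smul, smul_eq_mul]
    rw [h1, ← Real.norm_eq_abs]
    exact F.le_opNorm _
  obtain ⟨x', hx1, hx2⟩ := helly (Fin.snoc (fun i : Fin n => (v i).1) f)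
      (fun i => F ((Fin.snoc (fun i : Fin n => (v i).1) f : Fin (n+1) → _) i))
      (norm_nonneg F) hypB one_pos
  have hFpos : (0:ℝ) < ‖F‖ + 1 := by positivity
  refine ⟨(f, (‖F‖ + 1)⁻¹ • x'), hfn, ?_, hFf, hfv, ?_, ?_⟩
  · rw [norm_smul, Real.norm_eq_abs, abs_of_pos (by positivity)]
    rw [inv_mul_le_iff₀ hFpos, mul_one]
    exact hx1
  · intro m hm
    have h0 := hx2 (Fin.castSucc ⟨m, hm⟩)
    rw [Fin.snoc_castSucc] at h0
    rw [_root_.map_smul, smul_eq_mul, h0, mul_comm]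
  · have h0 := hx2 (Fin.last n)
    rw [Fin.snoc_last] at h0
    show f ((‖F‖ + 1)⁻¹ • x') = F f * (‖F‖ + 1)⁻¹
    rw [_root_.map_smul, smul_eq_mul, h0, mul_comm]


noncomputable def seqP (F : (X →L[ℝ] ℝ) →L[ℝ] ℝ) : ℕ → (X →L[ℝ] ℝ) × X
  | n => (step_exists F n (fun m => if h : m < n then seqP F m else 0)).choose
  termination_by n => n
  decreasing_by all_goals assumption

lemma seqP_eq (F : (X →L[ℝ] ℝ) →L[ℝ] ℝ) (n : ℕ) :
    seqP F n = (step_exists F n (fun m => if h : m < n then seqP F m else 0)).choose := by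
  rw [seqP]

lemma seqP_spec (F : (X →L[ℝ] ℝ) →L[ℝ] ℝ) (n : ℕ) :
    ‖(seqP F n).1‖ ≤ 1 ∧ ‖(seqP F n).2‖ ≤ 1 ∧
    F ((seqP F n).1) =
      (Metric.infDist F (Set.range (NormedSpace.inclusionInDoubleDual ℝ X))) / 2 ∧
    (∀ m < n, (seqP F n).1 ((seqP F m).2) = 0) ∧
    (∀ m < n, (seqP F m).1 ((seqP F n).2) = F ((seqP F m).1) * (‖F‖ + 1)⁻¹) ∧
    (seqP F n).1 ((seqP F n).2) = F ((seqP F n).1) * (‖F‖ + 1)⁻¹ := by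
  have h := (step_exists F n (fun m => if h : m < n then seqP F m else 0)).choose_spec
  rw [← seqP_eq F n] at h
  obtain ⟨h1, h2, h3, h4, h5, h6⟩ := h
  refine ⟨h1, h2, h3, fun m hm => ?_, fun m hm => ?_, h6⟩
  · have := h4 m hm
    rwa [dif_pos hm] at this
  · have := h5 m hm
    rwa [dif_pos hm] at this

end Step

/-- a Grothendieck space with weak*-sequentially compact dual ball is
reflexive. -/
theorem reflexive_of_grothendieck_of_wstar_seq_compact
    (X : Type*) [NormedAddCommGroup X] [NormedSpace ℝ X] [CompleteSpace X]
    (hG : GrothendieckSpace X) (hW : WStarSeqCompactDualBall X) :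
    Function.Surjective (NormedSpace.inclusionInDoubleDual ℝ X) := by
  by_contra hsur
  rw [Function.Surjective] at hsur
  push_neg at hsur
  obtain ⟨F, hF⟩ := hsur
  set J := NormedSpace.inclusionInDoubleDual ℝ X with hJdef
  have hFr : F ∉ Set.range J := by
    rintro ⟨x, rfl⟩
    exact hF x rfl
  have hclosed : IsClosed (Set.range (⇑J)) := by
    have hiso : Isometry (⇑J) := (NormedSpace.inclusionInDoubleDualLi ℝ (E := X)).isometry
    exact hiso.isClosedEmbedding.isClosed_range
  have hd0 : 0 < Metric.infDist F (Set.range J) :=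
    (hclosed.notMem_iff_infDist_pos ⟨J 0, Set.mem_range_self 0⟩).1 hFr
  set d := Metric.infDist F (Set.range J) with hd
  -- the sequences
  set f : ℕ → (X →L[ℝ] ℝ) := fun n => (seqP F n).1 with hf
  set x : ℕ → X := fun n => (seqP F n).2 with hx
  have hf1 : ∀ n, ‖f n‖ ≤ 1 := fun n => (seqP_spec F n).1
  have hx1 : ∀ n, ‖x n‖ ≤ 1 := fun n => (seqP_spec F n).2.1
  have hFf : ∀ n, F (f n) = d / 2 := fun n => (seqP_spec F n).2.2.1
  have hzero : ∀ m n : ℕ, m < n → f n (x m) = 0 := fun m n hmn =>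
    (seqP_spec F n).2.2.2.1 m hmn
  set θ : ℝ := (d / 2) * (‖F‖ + 1)⁻¹ with hθ
  have hθpos : 0 < θ := by
    have : (0:ℝ) < ‖F‖ + 1 := by positivity
    positivity
  have hbig : ∀ n m : ℕ, n ≤ m → f n (x m) = θ := by
    intro n m hnm
    rcases lt_or_eq_of_le hnm with hlt | rfl
    · have := (seqP_spec F m).2.2.2.2.1 n hlt
      rw [hθ, ← hFf n]
      exact this
    · have := (seqP_spec F n).2.2.2.2.2
      rw [hθ, ← hFf n]
      exact this
  -- the ultrafilter functional
  obtain ⟨U, hU⟩ := Ultrafilter.exists_le (atTop : Filter ℕ)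
  have hex : ∀ h : X →L[ℝ] ℝ, ∃ a : ℝ, Tendsto (fun m => h (x m)) (U : Filter ℕ) (nhds a) := by
    intro h
    have hmem : ∀ m, h (x m) ∈ Set.Icc (-‖h‖) ‖h‖ := by
      intro m
      have h1 : |h (x m)| ≤ ‖h‖ := by
        have h2 := h.le_opNorm (x m)
        have h3 : ‖h‖ * ‖x m‖ ≤ ‖h‖ * 1 := mul_le_mul_of_nonneg_left (hx1 m) (norm_nonneg h)
        rw [mul_one] at h3
        calc |h (x m)| = ‖h (x m)‖ := (Real.norm_eq_abs _).symm
          _ ≤ ‖h‖ * ‖x m‖ := h2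
          _ ≤ ‖h‖ := h3
      exact abs_le.1 h1
    have hle : (Ultrafilter.map (fun m => h (x m)) U : Filter ℝ) ≤ 𝓟 (Set.Icc (-‖h‖) ‖h‖) := by
      rw [Ultrafilter.coe_map, Filter.le_principal_iff, Filter.mem_map]
      exact Filter.univ_mem' hmem
    obtain ⟨a, -, ha⟩ := (isCompact_Icc (a := -‖h‖) (b := ‖h‖)).ultrafilter_le_nhds _ hle
    exact ⟨a, ha⟩
  -- the limit functional along the ultrafilter
  have hexu : ∀ h : X →L[ℝ] ℝ, Tendsto (fun m => h (x m)) (U : Filter ℕ) (nhds (hex h).choose) :=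
    fun h => (hex h).choose_spec
  let G0 : (X →L[ℝ] ℝ) →ₗ[ℝ] ℝ :=
    { toFun := fun h => (hex h).choose
      map_add' := by
        intro h h'
        refine tendsto_nhds_unique (hexu (h + h')) ?_
        have h2 := (hexu h).add (hexu h')
        simpa using h2
      map_smul' := by
        intro c h
        refine tendsto_nhds_unique (hexu (c • h)) ?_
        have h2 := (hexu h).const_mul c
        simpa [smul_eq_mul] using h2 }
  have hG0b : ∀ h : X →L[ℝ] ℝ, ‖G0 h‖ ≤ 1 * ‖h‖ := by
    intro h
    rw [one_mul, Real.norm_eq_abs]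
    have habs : Tendsto (fun m => |h (x m)|) (U : Filter ℕ) (nhds |(hex h).choose|) :=
      (hexu h).abs
    refine le_of_tendsto habs (Filter.Eventually.of_forall fun m => ?_)
    calc |h (x m)| = ‖h (x m)‖ := (Real.norm_eq_abs _).symm
      _ ≤ ‖h‖ * ‖x m‖ := h.le_opNorm _
      _ ≤ ‖h‖ * 1 := mul_le_mul_of_nonneg_left (hx1 m) (norm_nonneg h)
      _ = ‖h‖ := mul_one _
  let G : (X →L[ℝ] ℝ) →L[ℝ] ℝ := G0.mkContinuous 1 hG0b
  have hGapp : ∀ h : X →L[ℝ] ℝ, Tendsto (fun m => h (x m)) (U : Filter ℕ) (nhds (G h)) :=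
    fun h => hexu h
  -- weak* sequential compactness
  obtain ⟨φ, hφ, g, hg⟩ := hW f hf1
  have hgx : ∀ m, g (x m) = 0 := by
    intro m
    have h1 : Tendsto (fun k => f (φ k) (x m)) atTop (nhds 0) := by
      have hev : (fun k => f (φ k) (x m)) =ᶠ[atTop] fun _ => 0 := by
        filter_upwards [eventually_ge_atTop (m + 1)] with k hk
        exact hzero m (φ k) (lt_of_lt_of_le (Nat.lt_succ_self m) (le_trans hk hφ.le_apply))
      exact Tendsto.congr' hev.symm tendsto_const_nhds
    exact tendsto_nhds_unique (hg (x m)) h1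
  have hGg0 : G g = 0 := by
    have h1 : Tendsto (fun m => g (x m)) (U : Filter ℕ) (nhds 0) := by
      have h2 : (fun m => g (x m)) = fun _ => 0 := funext hgx
      rw [h2]
      exact tendsto_const_nhds
    exact tendsto_nhds_unique (hGapp g) h1
  have hGf : ∀ n, θ ≤ G (f n) := by
    intro n
    refine ge_of_tendsto (hGapp (f n)) ?_
    have hev : ∀ᶠ m in atTop, θ ≤ f n (x m) := by
      filter_upwards [eventually_ge_atTop n] with m hm
      exact (hbig n m hm).ge
    exact Filter.Eventually.filter_mono hU hev
  -- Grothendieck property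
  have hlim := hG (fun k => f (φ k)) g (fun y => hg y) G
  have hθle : θ ≤ G g :=
    ge_of_tendsto hlim (Filter.Eventually.of_forall fun k => hGf (φ k))
  rw [hGg0] at hθle
  exact absurd hθle (not_le.2 hθpos)
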